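/- arXiv:1105.2409 — 2 statements merged into one kernel-verified Lean document; each statement's English description precedes it below -/
import Mathlib

section
/- Let (X,r,μ) be a metric measure space with μ a probability measure with support equal to X. Suppose that for every ε > 0 there exists δ > 0 such that μ{x ∈ X : μ(B_ε(x)) ≤ δ} = 0. Then (X,r) is totally bounded. -/
open Metric MeasureTheory ENNReal

/-- From failure of total boundedness one extracts an infinite `ε`-separated sequence. -/
lemma exists_separated_seq {X : Type*} [MetricSpace X]
    (hnt : ¬ TotallyBounded (Set.univ : Set X)) :
    ∃ ε > (0 : ℝ), ∃ f : ℕ → X, ∀ m n, m < n → ε ≤ dist (f m) (f n) := by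
  rw [Metric.totallyBounded_iff] at hnt
  push_neg at hnt
  obtain ⟨ε, hε, hsep⟩ := hnt
  refine ⟨ε, hε, ?_⟩
  classical
  have key : ∀ s : Finset X, ∃ x : X, ∀ y ∈ s, ε ≤ dist y x := by
    intro s
    have hsub := hsep (s : Set X) s.finite_toSet
    rcases Set.not_subset.1 hsub with ⟨x, -, hx⟩
    refine ⟨x, fun y hy => ?_⟩
    by_contra hlt
    push_neg at hlt
    exact hx (Set.mem_biUnion hy (by rwa [mem_ball, dist_comm]))
  choose pick hpick using key
  -- build increasing finsets
  let g : ℕ → Finset X := fun n => Nat.rec ∅ (fun _ s => insert (pick s) s) n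
  have hg_succ : ∀ n, g (n + 1) = insert (pick (g n)) (g n) := fun n => rfl
  have hmono : ∀ n m, m ≤ n → g m ⊆ g n := by
    intro n
    induction n with
    | zero => intro m hm; simp [Nat.le_zero.1 hm, Finset.Subset.refl]
    | succ k ih =>
      intro m hm
      rcases eq_or_lt_of_le hm with h' | h'
      · subst h'; exact Finset.Subset.refl _
      · exact (ih m (Nat.lt_succ_iff.1 h')).trans
          (by rw [hg_succ]; exact Finset.subset_insert _ _)
  refine ⟨fun n => pick (g n), fun m n hmn => ?_⟩
  have hmem : pick (g m) ∈ g n := by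
    have : pick (g m) ∈ g (m + 1) := by rw [hg_succ]; exact Finset.mem_insert_self _ _
    exact hmono n (m + 1) hmn this
  exact hpick (g n) _ hmem

/-- If a Borel probability measure `μ` with full support on a separable metric space
satisfies: for every `ε > 0` there is `δ > 0` with `μ{x : μ(B_ε(x)) ≤ δ} = 0`,
then the space is totally bounded. -/
theorem totallyBounded_of_no_thin_points {X : Type*} [MetricSpace X]
    [TopologicalSpace.SeparableSpace X] [MeasurableSpace X] [BorelSpace X]
    (μ : Measure X) [IsProbabilityMeasure μ]
    (hsupp : ∀ x : X, ∀ r > (0 : ℝ), 0 < μ (ball x r))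
    (h : ∀ ε > (0 : ℝ), ∃ δ : ℝ≥0∞, 0 < δ ∧ μ {x : X | μ (closedBall x ε) ≤ δ} = 0) :
    TotallyBounded (Set.univ : Set X) := by
  by_contra hnt
  obtain ⟨ε, hε, f, hf⟩ := exists_separated_seq hnt
  have hε5 : (0 : ℝ) < ε / 5 := by linarith
  obtain ⟨δ, hδ, hA⟩ := h (ε / 5) hε5
  set A : Set X := {x : X | μ (closedBall x (ε / 5)) ≤ δ} with hAdef
  -- for each n pick a point in ball (f n) (ε/5) outside A
  have hy : ∀ n : ℕ, ∃ y : X, y ∈ ball (f n) (ε / 5) ∧ δ < μ (closedBall y (ε / 5)) := by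
    intro n
    have hpos := hsupp (f n) (ε / 5) hε5
    have : ¬ ball (f n) (ε / 5) ⊆ A := by
      intro hsub
      exact absurd (le_antisymm ((measure_mono hsub).trans hA.le) (zero_le))
        (ne_of_gt hpos)
    rcases Set.not_subset.1 this with ⟨y, hy1, hy2⟩
    exact ⟨y, hy1, lt_of_not_ge hy2⟩
  choose y hy1 hy2 using hy
  -- the closed balls around y n are pairwise disjoint
  have hdisj : Pairwise (Function.onFun Disjoint
      (fun n => closedBall (y n) (ε / 5))) := by
    intro m n hmn
    have hsep : ε ≤ dist (f m) (f n) := by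
      rcases hmn.lt_or_gt with h' | h'
      · exact hf m n h'
      · rw [dist_comm]; exact hf n m h'
    refine Set.disjoint_left.2 fun z hzm hzn => ?_
    have h1 : dist z (y m) ≤ ε / 5 := mem_closedBall.1 hzm
    have h2 : dist z (y n) ≤ ε / 5 := mem_closedBall.1 hzn
    have h3 : dist (y m) (f m) < ε / 5 := mem_ball.1 (hy1 m)
    have h4 : dist (y n) (f n) < ε / 5 := mem_ball.1 (hy1 n)
    have := dist_triangle4 (f m) (y m) z (f n)
    have h5 : dist (y m) z ≤ ε / 5 := by rwa [dist_comm] at h1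
    have h6 : dist z (f n) ≤ dist z (y n) + dist (y n) (f n) := dist_triangle _ _ _
    have h7 : dist (f m) (y m) < ε / 5 := by rwa [dist_comm] at h3
    linarith
  -- sum up measures: contradiction with probability measure
  have hmeas : ∀ n : ℕ, MeasurableSet (closedBall (y n) (ε / 5)) :=
    fun n => measurableSet_closedBall
  have hsum : μ (⋃ n : ℕ, closedBall (y n) (ε / 5)) = ∑' n : ℕ, μ (closedBall (y n) (ε / 5)) :=
    measure_iUnion hdisj hmeas
  have hle1 : μ (⋃ n : ℕ, closedBall (y n) (ε / 5)) ≤ 1 := prob_le_one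
  have htop : (∑' _ : ℕ, δ) = ⊤ :=
    ENNReal.tsum_const_eq_top_of_ne_zero (ne_of_gt hδ)
  have : (⊤ : ℝ≥0∞) ≤ 1 := by
    calc (⊤ : ℝ≥0∞) = ∑' _ : ℕ, δ := htop.symm
    _ ≤ ∑' n : ℕ, μ (closedBall (y n) (ε / 5)) :=
        ENNReal.tsum_le_tsum fun n => (hy2 n).le
    _ = μ (⋃ n : ℕ, closedBall (y n) (ε / 5)) := hsum.symm
    _ ≤ 1 := hle1
  exact absurd this (by simp)
end

section
/- Let (X,r,μ) be a complete separable metric space equipped with a Borel probability measure μ whose support is X. Then (X,r) is compact if and only if for every ε > 0 there exists δ > 0 such that μ{x ∈ X : μ(B_ε(x)) ≤ δ} = 0. -/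
open Metric MeasureTheory ENNReal

/-- A complete separable metric space with a Borel probability measure of full support
is compact iff for every `ε > 0` there is `δ > 0` with `μ{x : μ(B_ε(x)) ≤ δ} = 0`. -/
theorem compact_iff_no_thin_points {X : Type*} [MetricSpace X] [CompleteSpace X]
    [TopologicalSpace.SeparableSpace X] [MeasurableSpace X] [BorelSpace X]
    (μ : Measure X) [IsProbabilityMeasure μ]
    (hsupp : ∀ x : X, ∀ r > (0 : ℝ), 0 < μ (ball x r)) :
    CompactSpace X ↔
      ∀ ε > (0 : ℝ), ∃ δ : ℝ≥0∞, 0 < δ ∧ μ {x : X | μ (closedBall x ε) ≤ δ} = 0 := by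
  have hne : Nonempty X := by
    by_contra h
    rw [not_nonempty_iff] at h
    have h1 : μ Set.univ = 1 := measure_univ
    rw [Set.univ_eq_empty_iff.2 h, measure_empty] at h1
    exact zero_ne_one h1
  constructor
  · intro hcomp ε hε
    -- cover by balls of radius ε/2
    obtain ⟨t, ht⟩ := isCompact_univ.elim_finite_subcover (fun x : X => ball x (ε / 2))
      (fun x => isOpen_ball)
      (fun x _ => Set.mem_iUnion.2 ⟨x, mem_ball_self (half_pos hε)⟩)
    obtain ⟨x₀⟩ := hne
    have htne : t.Nonempty := by
      rcases Set.mem_iUnion₂.1 (ht (Set.mem_univ x₀)) with ⟨y, hy, -⟩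
      exact ⟨y, hy⟩
    set δ₀ : ℝ≥0∞ := t.inf' htne (fun x => μ (ball x (ε / 2))) with hδ₀
    have hδ₀pos : 0 < δ₀ := by
      rw [hδ₀]
      rcases Finset.exists_mem_eq_inf' htne (fun x => μ (ball x (ε / 2))) with ⟨y, hy, hyeq⟩
      rw [hyeq]
      exact hsupp y _ (half_pos hε)
    have hδ₀top : δ₀ ≠ ⊤ := by
      rcases Finset.exists_mem_eq_inf' htne (fun x => μ (ball x (ε / 2))) with ⟨y, hy, hyeq⟩
      rw [hδ₀, hyeq]
      exact (measure_lt_top μ _).ne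
    refine ⟨δ₀ / 2, ENNReal.half_pos hδ₀pos.ne', ?_⟩
    have : {x : X | μ (closedBall x ε) ≤ δ₀ / 2} = ∅ := by
      rw [Set.eq_empty_iff_forall_notMem]
      intro x hx
      rcases Set.mem_iUnion₂.1 (ht (Set.mem_univ x)) with ⟨y, hy, hxy⟩
      have hsub : ball y (ε / 2) ⊆ closedBall x ε := by
        intro z hz
        rw [mem_ball] at hz hxy
        rw [mem_closedBall]
        calc dist z x ≤ dist z y + dist y x := dist_triangle z y x
          _ ≤ ε / 2 + ε / 2 := by
              rw [dist_comm y x]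
              exact add_le_add hz.le hxy.le
          _ = ε := by ring
      have h1 : δ₀ ≤ μ (ball y (ε / 2)) := Finset.inf'_le _ hy
      have h2 : δ₀ ≤ μ (closedBall x ε) := h1.trans (measure_mono hsub)
      have h3 : δ₀ ≤ δ₀ / 2 := h2.trans hx
      exact absurd h3 (not_le.2 (ENNReal.half_lt_self hδ₀pos.ne' hδ₀top))
    rw [this, measure_empty]
  · intro h
    by_contra hcomp
    -- not compact → not totally bounded
    have htb : ¬ TotallyBounded (Set.univ : Set X) := by
      intro htb
      exact hcomp ⟨(isCompact_iff_totallyBounded_isComplete.2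
        ⟨htb, completeSpace_iff_isComplete_univ.1 ‹_›⟩)⟩
    rw [totallyBounded_iff] at htb
    push_neg at htb
    obtain ⟨ε, hε, hsep⟩ := htb
    -- build an ε-separated sequence
    have hrel : Std.Symm (fun x y : X => ε ≤ dist x y) :=
      ⟨fun a b hab => by rwa [dist_comm]⟩
    obtain ⟨f, -, hf⟩ := exists_seq_of_forall_finset_exists' (fun _ : X => True)
      (fun x y => ε ≤ dist x y) (by
        intro s _
        rcases Set.not_subset.1 (hsep s (s.finite_toSet)) with ⟨y, -, hy⟩
        refine ⟨y, trivial, fun x hx => ?_⟩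
        by_contra hxy
        exact hy (Set.mem_biUnion hx (by rw [mem_ball, dist_comm]; exact not_le.1 hxy)))
    -- apply the hypothesis with ε/4
    obtain ⟨δ, hδ, hS⟩ := h (ε / 4) (by linarith)
    -- disjoint closed balls of radius ε/3
    have hdisj : Pairwise (Function.onFun Disjoint (fun n => closedBall (f n) (ε / 3))) := by
      intro m n hmn
      apply closedBall_disjoint_closedBall
      have := hf hmn
      simp only [Function.onFun] at this ⊢
      linarith
    have hsum : (∑' n : ℕ, μ (closedBall (f n) (ε / 3))) ≤ 1 := by
      rw [← measure_iUnion hdisj (fun n => measurableSet_closedBall)]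
      exact measure_mono (Set.subset_univ _) |>.trans_eq measure_univ
    -- some ball must be small
    have hx : ∃ n, μ (closedBall (f n) (ε / 3)) ≤ δ := by
      by_contra hall
      push_neg at hall
      have : (∑' _ : ℕ, δ) ≤ ∑' n : ℕ, μ (closedBall (f n) (ε / 3)) :=
        ENNReal.tsum_le_tsum (fun n => (hall n).le)
      rw [ENNReal.tsum_const_eq_top_of_ne_zero hδ.ne'] at this
      exact absurd (this.trans hsum) (by simp)
    obtain ⟨n, hn⟩ := hx
    -- a whole small ball around f n is thin
    have hsub : ball (f n) (ε / 12) ⊆ {x : X | μ (closedBall x (ε / 4)) ≤ δ} := by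
      intro y hy
      rw [mem_ball] at hy
      have hsub2 : closedBall y (ε / 4) ⊆ closedBall (f n) (ε / 3) := by
        intro z hz
        rw [mem_closedBall] at hz ⊢
        calc dist z (f n) ≤ dist z y + dist y (f n) := dist_triangle _ _ _
          _ ≤ ε / 4 + ε / 12 := add_le_add hz hy.le
          _ = ε / 3 := by ring
      exact (measure_mono hsub2).trans hn
    have : μ (ball (f n) (ε / 12)) = 0 :=
      le_antisymm ((measure_mono hsub).trans hS.le) zero_le
    exact absurd this (hsupp (f n) (ε / 12) (by linarith)).ne'
end
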